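/- Let (s_n)_{n≥1} ⊆ (0,1) satisfy s_2 < 1 - s_1/(1 - s_1) and s_n ≤ s_{n-2}/2 - 2·s_{n-1} for all n ≥ 3, and define c_n := 1 - s_n for n odd and c_n := s_n for n even, with a_n := 1 - c_n. Then the sequence (α̃_{2n}²)_{n≥1} is strictly increasing, i.e., a_{2n}·c_{2n-1} < a_{2n+2}·c_{2n+1} for all n ≥ 1. -/
import Mathlib


theorem stmt14 (s c a : ℕ → ℝ)
    (hs : ∀ n, 1 ≤ n → s n ∈ Set.Ioo (0 : ℝ) 1)
    (h1 : s 2 < 1 - s 1 / (1 - s 1))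
    (h2 : ∀ n, 3 ≤ n → s n ≤ s (n - 2) / 2 - 2 * s (n - 1))
    (hcodd : ∀ n, 1 ≤ n → Odd n → c n = 1 - s n)
    (hceven : ∀ n, 1 ≤ n → Even n → c n = s n)
    (ha : ∀ n, a n = 1 - c n) :
    ∀ n : ℕ, 1 ≤ n → a (2 * n) * c (2 * n - 1) < a (2 * n + 2) * c (2 * n + 1) := by
  have key : ∀ m, 1 ≤ m → s (m + 2) < s m := by
    intro m hm
    have h := h2 (m + 2) (by omega)
    have e1 : m + 2 - 2 = m := by omega
    have e2 : m + 2 - 1 = m + 1 := by omega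
    rw [e1, e2] at h
    have p1 := (hs m hm).1
    have p2 := (hs (m + 1) (by omega)).1
    linarith
  intro n hn
  have e1 : c (2 * n - 1) = 1 - s (2 * n - 1) :=
    hcodd _ (by omega) ⟨n - 1, by omega⟩
  have e2 : c (2 * n) = s (2 * n) := hceven _ (by omega) ⟨n, by omega⟩
  have e3 : c (2 * n + 1) = 1 - s (2 * n + 1) := hcodd _ (by omega) ⟨n, by omega⟩
  have e4 : c (2 * n + 2) = s (2 * n + 2) := hceven _ (by omega) ⟨n + 1, by omega⟩
  rw [ha, ha, e1, e2, e3, e4]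
  have k1 := key (2 * n - 1) (by omega)
  have e5 : 2 * n - 1 + 2 = 2 * n + 1 := by omega
  rw [e5] at k1
  have k2 := key (2 * n) (by omega)
  have b1 := (hs (2 * n) (by omega)).2
  have b2 := (hs (2 * n + 1) (by omega)).2
  have b3 := (hs (2 * n - 1) (by omega)).2
  nlinarith [mul_pos (sub_pos.2 b1) (sub_pos.2 b2)]
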